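/- arXiv:2101.11258 — 2 statements merged into one kernel-verified Lean document; each statement's English description precedes it below -/
import Mathlib

section
/- Lipschitz bound for the vortex distribution tested against a smooth function: Let (x_1,…,x_N) be a solution of the point-vortex system with the Euler kernel G_1 on [0,T) with no collapse, and let φ : ℝ² → ℝ be twice continuously differentiable with bounded second derivative. Then for all t ∈ [0,T), |d/dt Σ_{i=1}^N a_i φ(x_i(t))| ≤ (1/(4π)) (Σ_{i≠j} |a_i| |a_j|) · sup_{x∈ℝ²} ‖D²φ(x)‖. In particular t ↦ Σ_{i=1}^N a_i φ(x_i(t)) is Lipschitz on [0,T) and converges as t → T⁻. -/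
open Filter MeasureTheory

noncomputable section

/-- The plane `ℝ²`. -/
abbrev Plane : Type := EuclideanSpace ℝ (Fin 2)

/-- Counterclockwise rotation by `π/2`: `(v₁, v₂)^⊥ = (−v₂, v₁)`. -/
def perp (v : Plane) : Plane := WithLp.toLp 2 ![-v 1, v 0]

/-- `∇^⊥_y K(|y|) = K'(|y|) y^⊥ / |y|` for a radial kernel profile `K`. -/
def gradPerp (K : ℝ → ℝ) (y : Plane) : Plane := (deriv K ‖y‖ / ‖y‖) • perp y

/-- A solution of the point-vortex system with intensities `a`, kernel profile `G`,
on the time interval `[0, T)`, with no collapse. -/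
def IsVortexSolution (N : ℕ) (a : Fin N → ℝ) (G : ℝ → ℝ) (T : ℝ)
    (x : Fin N → ℝ → Plane) : Prop :=
  (∀ t ∈ Set.Ico (0 : ℝ) T, ∀ i j : Fin N, i ≠ j → x i t ≠ x j t) ∧
  ∀ i : Fin N, ∀ t ∈ Set.Ico (0 : ℝ) T,
    HasDerivWithinAt (x i)
      (∑ j ∈ Finset.univ.erase i, a j • gradPerp G (x i t - x j t))
      (Set.Ico 0 T) t

/-- The Euler kernel `G₁(r) = (1/(2π)) log(1/r)`, profile of the Green function of the
Laplacian on the plane. -/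
def eulerKernel (r : ℝ) : ℝ := (1 / (2 * Real.pi)) * Real.log (1 / r)

/-- The quasi-geostrophic kernels: `G₁(r) = (1/(2π)) log(1/r)` and, for `s ∈ (0,1)`,
`G_s(r) = (Γ(1−s)/(2^{2s} π Γ(s))) r^{−2(1−s)}`. -/
def sqgKernel (s : ℝ) (r : ℝ) : ℝ :=
  if s = 1 then eulerKernel r
  else (Real.Gamma (1 - s) / ((2 : ℝ) ^ (2 * s) * Real.pi * Real.Gamma s)) *
    r ^ (-(2 * (1 - s)))

lemma perp_norm (v : Plane) : ‖perp v‖ = ‖v‖ := by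
  simp only [perp, EuclideanSpace.norm_eq, PiLp.toLp_apply, Real.norm_eq_abs, sq_abs, Fin.sum_univ_two,
    Matrix.cons_val_zero, Matrix.cons_val_one, Matrix.head_cons]
  congr 1; ring

lemma perp_neg (v : Plane) : perp (-v) = -perp v := by
  ext i
  fin_cases i <;> simp [perp]

lemma gradPerp_neg (K : ℝ → ℝ) (y : Plane) : gradPerp K (-y) = -gradPerp K y := by
  rw [gradPerp, gradPerp, norm_neg, perp_neg, smul_neg]

lemma deriv_eulerKernel {r : ℝ} (hr : r ≠ 0) : deriv eulerKernel r = -(1 / (2 * Real.pi)) / r := by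
  have h : eulerKernel = fun s => (-(1 / (2 * Real.pi))) * Real.log s := by
    funext s; rw [eulerKernel, one_div s, Real.log_inv]; ring
  rw [h, deriv_const_mul _ (Real.differentiableAt_log hr), Real.deriv_log]
  field_simp

lemma norm_gradPerp {y : Plane} (hy : y ≠ 0) :
    ‖gradPerp eulerKernel y‖ = 1 / (2 * Real.pi * ‖y‖) := by
  have hny : ‖y‖ ≠ 0 := norm_ne_zero_iff.mpr hy
  have hπ : (0:ℝ) < Real.pi := Real.pi_pos
  rw [gradPerp, norm_smul, perp_norm, deriv_eulerKernel hny, Real.norm_eq_abs, abs_div, abs_div,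
    abs_neg, abs_of_nonneg (by positivity : (0:ℝ) ≤ 1 / (2 * Real.pi)),
    abs_of_nonneg (norm_nonneg y)]
  field_simp


/-- Lipschitz bound for the vortex distribution tested against a `C²` function `φ` with
bounded second derivative, for the Euler point-vortex system: the derivative of
`t ↦ Σ_i a_i φ(x_i(t))` exists and is bounded by
`(1/(4π)) (Σ_{i≠j} |a_i||a_j|) sup ‖D²φ‖`; in particular this function is Lipschitz on
`[0,T)` and converges as `t → T⁻`. -/
theorem vortex_distribution_lipschitz_bound
    (N : ℕ) (hN : 1 ≤ N) (a : Fin N → ℝ) (ha : ∀ i, a i ≠ 0)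
    (T : ℝ) (hT : 0 < T) (x : Fin N → ℝ → Plane)
    (hsol : IsVortexSolution N a eulerKernel T x)
    (φ : Plane → ℝ) (hφ : ContDiff ℝ 2 φ)
    (K : ℝ) (hK : ∀ y : Plane, ‖iteratedFDeriv ℝ 2 φ y‖ ≤ K) :
    (∀ t ∈ Set.Ico (0 : ℝ) T, ∃ v : ℝ,
        HasDerivWithinAt (fun τ => ∑ i : Fin N, a i * φ (x i τ)) v (Set.Ico 0 T) t ∧
        |v| ≤ (1 / (4 * Real.pi)) *
          (∑ i : Fin N, ∑ j ∈ Finset.univ.erase i, |a i| * |a j|) * K) ∧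
    LipschitzOnWith
      (Real.toNNReal ((1 / (4 * Real.pi)) *
        (∑ i : Fin N, ∑ j ∈ Finset.univ.erase i, |a i| * |a j|) * K))
      (fun t => ∑ i : Fin N, a i * φ (x i t)) (Set.Ico 0 T) ∧
    ∃ L : ℝ, Tendsto (fun t => ∑ i : Fin N, a i * φ (x i t))
      (nhdsWithin T (Set.Ico 0 T)) (nhds L) := by
  obtain ⟨hsep, hode⟩ := hsol
  have hπ : (0:ℝ) < Real.pi := Real.pi_pos
  set A : ℝ := ∑ i : Fin N, ∑ j ∈ Finset.univ.erase i, |a i| * |a j| with hA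
  set C : ℝ := (1 / (4 * Real.pi)) * A * K with hCdef
  have hK0 : (0:ℝ) ≤ K := le_trans (norm_nonneg _) (hK 0)
  have hA0 : (0:ℝ) ≤ A :=
    Finset.sum_nonneg fun i _ => Finset.sum_nonneg fun j _ =>
      mul_nonneg (abs_nonneg _) (abs_nonneg _)
  have hC0 : (0:ℝ) ≤ C := by positivity
  have hφd : Differentiable ℝ φ := hφ.differentiable (by norm_num)
  -- Lipschitz bound on the gradient of φ
  have hDlip : ∀ u v : Plane, ‖fderiv ℝ φ u - fderiv ℝ φ v‖ ≤ K * ‖u - v‖ := by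
    intro u v
    have h1 : ContDiff ℝ 1 (fderiv ℝ φ) := hφ.fderiv_right (by norm_num)
    have := (convex_univ : Convex ℝ (Set.univ : Set Plane)).norm_image_sub_le_of_norm_hasFDerivWithin_le
      (f := fderiv ℝ φ) (f' := fun y => fderiv ℝ (fderiv ℝ φ) y) (C := K)
      (fun y _ => ((h1.differentiable (by norm_num)) y).hasFDerivAt.hasFDerivWithinAt)
      (fun y _ => by
        have hnorm : ‖fderiv ℝ (fderiv ℝ φ) y‖ = ‖iteratedFDeriv ℝ 2 φ y‖ := by
          rw [← norm_iteratedFDeriv_fderiv (n := 1), ← norm_iteratedFDeriv_fderiv (n := 0),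
            norm_iteratedFDeriv_zero]
        rw [hnorm]; exact hK y)
      (Set.mem_univ v) (Set.mem_univ u)
    exact this
  -- the candidate derivative
  set V : ℝ → ℝ := fun t => ∑ i : Fin N, ∑ j ∈ Finset.univ.erase i,
    (a i * a j) * (fderiv ℝ φ (x i t)) (gradPerp eulerKernel (x i t - x j t)) with hV
  have key : ∀ t ∈ Set.Ico (0:ℝ) T,
      HasDerivWithinAt (fun τ => ∑ i : Fin N, a i * φ (x i τ)) (V t) (Set.Ico 0 T) t ∧
      |V t| ≤ C := by
    intro t ht
    constructor
    · have hi : ∀ i : Fin N, HasDerivWithinAt (fun τ => a i * φ (x i τ))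
          (a i * (fderiv ℝ φ (x i t))
            (∑ j ∈ Finset.univ.erase i, a j • gradPerp eulerKernel (x i t - x j t)))
          (Set.Ico 0 T) t :=
        fun i => ((hφd (x i t)).hasFDerivAt.comp_hasDerivWithinAt t (hode i t ht)).const_mul (a i)
      have hsum := HasDerivWithinAt.fun_sum (fun i (_ : i ∈ Finset.univ) => hi i)
      convert hsum using 1
      · exact rfl
      · exact rfl
      rw [hV]
      refine Finset.sum_congr rfl fun i _ => ?_
      rw [map_sum, Finset.mul_sum]
      refine Finset.sum_congr rfl fun j _ => ?_
      rw [ContinuousLinearMap.map_smul, smul_eq_mul]; ring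
    · -- symmetrization
      set f : Fin N → Fin N → ℝ := fun i j =>
        (a i * a j) * (fderiv ℝ φ (x i t)) (gradPerp eulerKernel (x i t - x j t)) with hf
      have hswap : V t = ∑ i : Fin N, ∑ j ∈ Finset.univ.erase i, f j i := by
        rw [hV]
        exact Finset.sum_comm' (fun i j => by
          simp [Finset.mem_erase, eq_comm, and_comm, ne_comm])
      have hterm : ∀ i : Fin N, ∀ j ∈ Finset.univ.erase i,
          |f i j + f j i| ≤ |a i| * |a j| * (K / (2 * Real.pi)) := by
        intro i j hj
        have hij : j ≠ i := Finset.ne_of_mem_erase hj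
        have hxne : x i t ≠ x j t := hsep t ht i j hij.symm
        have hxij : x i t - x j t ≠ 0 := sub_ne_zero.mpr hxne
        have hnxij : ‖x i t - x j t‖ ≠ 0 := norm_ne_zero_iff.mpr hxij
        set w : Plane := gradPerp eulerKernel (x i t - x j t) with hw
        have hwn : ‖w‖ = 1 / (2 * Real.pi * ‖x i t - x j t‖) := norm_gradPerp hxij
        have hfji : f j i = -((a i * a j) * (fderiv ℝ φ (x j t)) w) := by
          rw [hf]
          simp only []
          rw [show x j t - x i t = -(x i t - x j t) by abel, gradPerp_neg, map_neg]
          ring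
        have hsumf : f i j + f j i
            = (a i * a j) * ((fderiv ℝ φ (x i t) - fderiv ℝ φ (x j t)) w) := by
          rw [hfji, hf]
          simp only [ContinuousLinearMap.sub_apply]
          ring
        rw [hsumf, abs_mul, abs_mul]
        have h1 : |(fderiv ℝ φ (x i t) - fderiv ℝ φ (x j t)) w| ≤ K / (2 * Real.pi) := by
          rw [← Real.norm_eq_abs]
          calc ‖(fderiv ℝ φ (x i t) - fderiv ℝ φ (x j t)) w‖
              ≤ ‖fderiv ℝ φ (x i t) - fderiv ℝ φ (x j t)‖ * ‖w‖ :=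
            ContinuousLinearMap.le_opNorm _ _
            _ ≤ (K * ‖x i t - x j t‖) * (1 / (2 * Real.pi * ‖x i t - x j t‖)) := by
              rw [hwn]
              exact mul_le_mul_of_nonneg_right (hDlip _ _) (by positivity)
            _ = K / (2 * Real.pi) := by field_simp
        exact mul_le_mul_of_nonneg_left h1 (mul_nonneg (abs_nonneg _) (abs_nonneg _))
      have h2V : |V t + V t| ≤ A * (K / (2 * Real.pi)) := by
        have heq : V t + V t = ∑ i : Fin N, ∑ j ∈ Finset.univ.erase i, (f i j + f j i) := by
          nth_rewrite 2 [hswap]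
          rw [hV]
          rw [← Finset.sum_add_distrib]
          exact Finset.sum_congr rfl fun i _ => (Finset.sum_add_distrib).symm
        rw [heq, hA]
        calc |∑ i : Fin N, ∑ j ∈ Finset.univ.erase i, (f i j + f j i)|
            ≤ ∑ i : Fin N, |∑ j ∈ Finset.univ.erase i, (f i j + f j i)| :=
          Finset.abs_sum_le_sum_abs _ _
          _ ≤ ∑ i : Fin N, ∑ j ∈ Finset.univ.erase i, |f i j + f j i| :=
            Finset.sum_le_sum fun i _ => Finset.abs_sum_le_sum_abs _ _
          _ ≤ ∑ i : Fin N, ∑ j ∈ Finset.univ.erase i, |a i| * |a j| * (K / (2 * Real.pi)) :=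
            Finset.sum_le_sum fun i _ => Finset.sum_le_sum fun j hj => hterm i j hj
          _ = (∑ i : Fin N, ∑ j ∈ Finset.univ.erase i, |a i| * |a j|) * (K / (2 * Real.pi)) := by
            rw [Finset.sum_mul]
            exact Finset.sum_congr rfl fun i _ => (Finset.sum_mul _ _ _).symm
      have : 2 * |V t| ≤ A * (K / (2 * Real.pi)) := by
        calc 2 * |V t| = |V t + V t| := by rw [← two_mul, abs_mul, abs_two]
          _ ≤ _ := h2V
      linarith [this, show A * (K / (2 * Real.pi)) = 2 * C by rw [hCdef]; field_simp; ring]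
  have hlip : LipschitzOnWith (Real.toNNReal C)
      (fun t => ∑ i : Fin N, a i * φ (x i t)) (Set.Ico 0 T) := by
    refine (convex_Ico 0 T).lipschitzOnWith_of_nnnorm_hasDerivWithin_le
      (fun t ht => (key t ht).1) (fun t ht => ?_)
    rw [← NNReal.coe_le_coe, coe_nnnorm, Real.coe_toNNReal C hC0, Real.norm_eq_abs]
    exact (key t ht).2
  refine ⟨fun t ht => ⟨V t, (key t ht).1, (key t ht).2⟩, hlip, ?_⟩
  obtain ⟨g, hg, hEq⟩ := hlip.extend_real
  refine ⟨g T, ?_⟩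
  have h1 : Tendsto g (nhdsWithin T (Set.Ico 0 T)) (nhds (g T)) :=
    (hg.continuous.tendsto T).mono_left nhdsWithin_le_nhds
  refine Filter.Tendsto.congr' ?_ h1
  filter_upwards [self_mem_nhdsWithin] with s hs
  exact (hEq hs).symm
end
end

section
/- Reduction of the improbability of collapses to the modified (difference) system: Let s ∈ (0,1], N ≥ 1 and intensities a_1,…,a_N ∈ ℝ∖{0}. Suppose that for every i ∈ {1,…,N}, every T > 0 and every ρ > 0, the set of initial data Y_i = (y_{ij})_{j≠i} ∈ (B(0,ρ))^{N−1} ⊆ ℝ^{2(N−1)} for which there exist T_X ∈ [0,T] and a solution of the modified system with kernel G_s on [0,T_X) with initial datum Y_i, no collapse (all |y_{ij}(t)| > 0 and |y_{ij}(t) − y_{ik}(t)| > 0), and liminf_{t→T_X⁻} min_{j≠i} |y_{ij}(t)| = 0, has Lebesgue measure zero in ℝ^{2(N−1)}. Then the set of initial data X ∈ ℝ^{2N} leading to a collapse in finite time of the point-vortex system with kernel G_s has Lebesgue measure zero in ℝ^{2N}. -/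
open Filter MeasureTheory

noncomputable section

/-- The solution `x` collapses at time `T`:
`liminf_{t→T⁻} min_{i≠j} |x_i(t) − x_j(t)| = 0`, phrased as: for every `ε > 0`,
arbitrarily close to `T` (from the left, inside `[0,T)`) two distinct vortices
are at distance `< ε`. -/
def CollapsesAt (N : ℕ) (x : Fin N → ℝ → Plane) (T : ℝ) : Prop :=
  ∀ ε > (0 : ℝ), ∀ t₀, 0 ≤ t₀ → t₀ < T →
    ∃ t, t₀ < t ∧ t < T ∧ ∃ i j : Fin N, i ≠ j ∧ ‖x i t - x j t‖ < ε

/-- A solution of the modified (difference) system associated to the index `i`: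
the curves `y_{ij}`, `j ≠ i`, satisfy
`y_{ij}' = (a_i + a_j) ∇^⊥K(|y_{ij}|) + Σ_{k≠i,j} a_k (∇^⊥K(|y_{ik}|) + ∇^⊥K(|y_{ij} − y_{ik}|))`
at every time of the set `I`. -/
def IsModifiedSolutionOn (N : ℕ) (a : Fin N → ℝ) (K : ℝ → ℝ) (i : Fin N)
    (I : Set ℝ) (y : {j : Fin N // j ≠ i} → ℝ → Plane) : Prop :=
  ∀ j : {j : Fin N // j ≠ i}, ∀ t ∈ I,
    HasDerivWithinAt (y j)
      ((a i + a j.val) • gradPerp K (y j t) +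
        ∑ k ∈ Finset.univ.erase j,
          a k.val • (gradPerp K (y k t) + gradPerp K (y j t - y k t)))
      I t

/-- No collapse for the modified system on the time set `I`: all the `y_{ij}` stay away
from `0` and from each other (so that all mutual distances `|x_i − x_j|` stay positive). -/
def ModifiedNoCollapseOn (N : ℕ) (i : Fin N) (I : Set ℝ)
    (y : {j : Fin N // j ≠ i} → ℝ → Plane) : Prop :=
  (∀ j : {j : Fin N // j ≠ i}, ∀ t ∈ I, y j t ≠ 0) ∧
  (∀ j k : {j : Fin N // j ≠ i}, j ≠ k → ∀ t ∈ I, y j t ≠ y k t)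

/-- The modified system collapses (with the vortex `i`) at time `T`:
`liminf_{t→T⁻} min_{j≠i} |y_{ij}(t)| = 0`. -/
def ModifiedCollapsesAt (N : ℕ) (i : Fin N)
    (y : {j : Fin N // j ≠ i} → ℝ → Plane) (T : ℝ) : Prop :=
  ∀ ε > (0 : ℝ), ∀ t₀, 0 ≤ t₀ → t₀ < T →
    ∃ t, t₀ < t ∧ t < T ∧ ∃ j : {j : Fin N // j ≠ i}, ‖y j t‖ < ε

/-- The linear map sending positions to differences with the `i`-th position. -/
def diffMap (N : ℕ) (i : Fin N) : (Fin N → Plane) →ₗ[ℝ] ({j : Fin N // j ≠ i} → Plane) where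
  toFun X := fun j => X i - X j.val
  map_add' X Y := by funext j; simp [Pi.add_apply]; abel
  map_smul' c X := by funext j; simp [Pi.smul_apply, smul_sub]

lemma diffMap_surjective (N : ℕ) (i : Fin N) : Function.Surjective (diffMap N i) := by
  intro Y
  refine ⟨fun k => if h : k = i then 0 else -Y ⟨k, h⟩, ?_⟩
  funext j
  simp [diffMap, dif_neg j.prop]

lemma preimage_null (N : ℕ) (i : Fin N) (S : Set ({j : Fin N // j ≠ i} → Plane))
    (hS : volume S = 0) :
    volume ((fun X : Fin N → Plane => fun j : {j : Fin N // j ≠ i} => X i - X j.val) ⁻¹' S)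
      = 0 := by
  haveI h1 : (volume : Measure (Fin N → Plane)).IsAddHaarMeasure := ⟨⟩
  haveI h2 : (volume : Measure ({j : Fin N // j ≠ i} → Plane)).IsAddHaarMeasure := ⟨⟩
  obtain ⟨c, hc, hmap⟩ :=
    (diffMap N i).exists_map_addHaar_eq_smul_addHaar volume volume (diffMap_surjective N i)
  obtain ⟨U, hSU, hUm, hU0⟩ := exists_measurable_superset_of_null hS
  have hLmeas : Measurable (diffMap N i) :=
    (diffMap N i).continuous_of_finiteDimensional.measurable
  have hpre : volume ((diffMap N i) ⁻¹' U) = (volume.map (diffMap N i)) U :=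
    (Measure.map_apply hLmeas hUm).symm
  have h0 : (volume.map (diffMap N i)) U = 0 := by
    rw [hmap]; simp [hU0]
  exact measure_mono_null (Set.preimage_mono hSU) (by rw [show
    ((fun X : Fin N → Plane => fun j : {j : Fin N // j ≠ i} => X i - X j.val) ⁻¹' U)
      = (diffMap N i) ⁻¹' U from rfl, hpre, h0])

/-- The algebraic identity between the right-hand side of the modified system and the
difference of the right-hand sides of the point-vortex system. -/
lemma modified_rhs_eq (N : ℕ) (a : Fin N → ℝ) (G : ℝ → ℝ) (i : Fin N)
    (j : {j : Fin N // j ≠ i}) (X : Fin N → Plane) :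
    (a i + a j.val) • gradPerp G (X i - X j.val) +
      ∑ k ∈ Finset.univ.erase j,
        a k.val • (gradPerp G (X i - X k.val) +
          gradPerp G ((X i - X j.val) - (X i - X k.val)))
    = (∑ k ∈ Finset.univ.erase i, a k • gradPerp G (X i - X k)) -
      ∑ k ∈ Finset.univ.erase j.val, a k • gradPerp G (X j.val - X k) := by
  have hjmem : j.val ∈ Finset.univ.erase i := Finset.mem_erase.mpr ⟨j.prop, Finset.mem_univ _⟩
  have himem : i ∈ Finset.univ.erase j.val :=
    Finset.mem_erase.mpr ⟨Ne.symm j.prop, Finset.mem_univ _⟩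
  have h1 : ∑ k ∈ Finset.univ.erase i, a k • gradPerp G (X i - X k)
      = ∑ k ∈ (Finset.univ.erase i).erase j.val, a k • gradPerp G (X i - X k)
        + a j.val • gradPerp G (X i - X j.val) :=
    (Finset.sum_erase_add _ _ hjmem).symm
  have h2 : ∑ k ∈ Finset.univ.erase j.val, a k • gradPerp G (X j.val - X k)
      = ∑ k ∈ (Finset.univ.erase j.val).erase i, a k • gradPerp G (X j.val - X k)
        + a i • gradPerp G (X j.val - X i) :=
    (Finset.sum_erase_add _ _ himem).symm
  have h3 : (Finset.univ.erase j.val).erase i = (Finset.univ.erase i).erase j.val :=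
    Finset.erase_right_comm
  have hset : ((Finset.univ.erase j).map (Function.Embedding.subtype (fun k : Fin N => k ≠ i)))
      = (Finset.univ.erase i).erase j.val := by
    ext k
    constructor
    · intro hk
      obtain ⟨b, hb, rfl⟩ := Finset.mem_map.mp hk
      have hbj : b ≠ j := (Finset.mem_erase.mp hb).1
      exact Finset.mem_erase.mpr ⟨fun h => hbj (Subtype.ext h),
        Finset.mem_erase.mpr ⟨b.prop, Finset.mem_univ _⟩⟩
    · intro hk
      have hkj := (Finset.mem_erase.mp hk).1
      have hki := (Finset.mem_erase.mp (Finset.mem_erase.mp hk).2).1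
      exact Finset.mem_map.mpr ⟨⟨k, hki⟩,
        Finset.mem_erase.mpr ⟨fun h => hkj (congrArg Subtype.val h), Finset.mem_univ _⟩, rfl⟩
  have h4 : ∑ k ∈ Finset.univ.erase j,
        a k.val • (gradPerp G (X i - X k.val) +
          gradPerp G ((X i - X j.val) - (X i - X k.val)))
      = ∑ k ∈ (Finset.univ.erase i).erase j.val,
          (a k • gradPerp G (X i - X k) - a k • gradPerp G (X j.val - X k)) := by
    rw [← hset, Finset.sum_map]
    apply Finset.sum_congr rfl
    intro k _
    simp only [Function.Embedding.coe_subtype]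
    have hd : (X i - X j.val) - (X i - X k.val) = -(X j.val - X k.val) := by abel
    rw [hd, gradPerp_neg, smul_add, smul_neg]; abel
  have hvi : a i • gradPerp G (X j.val - X i) = -(a i • gradPerp G (X i - X j.val)) := by
    have hxy : X j.val - X i = -(X i - X j.val) := by abel
    rw [hxy, gradPerp_neg, smul_neg]
  rw [h4, h1, h2, h3, Finset.sum_sub_distrib, hvi, add_smul]
  abel

/-- Reduction of the improbability of collapses to the modified (difference) system:
if for every `i`, `T > 0` and `ρ > 0` the set of initial data in `(B(0,ρ))^{N−1}` leading
to a collapse of the modified system has Lebesgue measure zero in `ℝ^{2(N−1)}`, then the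
set of initial data leading to a collapse in finite time of the point-vortex system with
kernel `G_s` has Lebesgue measure zero in `ℝ^{2N}`. -/
theorem collapse_reduction_to_modified_system
    (s : ℝ) (hs : 0 < s) (hs1 : s ≤ 1)
    (N : ℕ) (hN : 1 ≤ N) (a : Fin N → ℝ) (ha : ∀ i, a i ≠ 0)
    (hyp : ∀ i : Fin N, ∀ T : ℝ, 0 < T → ∀ ρ : ℝ, 0 < ρ →
      volume {Y : {j : Fin N // j ≠ i} → Plane |
        (∀ j, ‖Y j‖ < ρ) ∧
        ∃ TX : ℝ, 0 ≤ TX ∧ TX ≤ T ∧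
          ∃ y : {j : Fin N // j ≠ i} → ℝ → Plane,
            IsModifiedSolutionOn N a (sqgKernel s) i (Set.Ico 0 TX) y ∧
            ModifiedNoCollapseOn N i (Set.Ico 0 TX) y ∧
            (∀ j, y j 0 = Y j) ∧ ModifiedCollapsesAt N i y TX} = 0) :
    volume {X : Fin N → Plane |
      (∀ i j : Fin N, i ≠ j → X i ≠ X j) ∧
      ∃ T : ℝ, 0 < T ∧ ∃ x : Fin N → ℝ → Plane,
        IsVortexSolution N a (sqgKernel s) T x ∧ (∀ i, x i 0 = X i) ∧
        CollapsesAt N x T} = 0 := by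
  refine measure_mono_null (t := ⋃ (i : Fin N), ⋃ (n : ℕ), ⋃ (m : ℕ),
    (fun X : Fin N → Plane => fun j : {j : Fin N // j ≠ i} => X i - X j.val) ⁻¹'
      {Y : {j : Fin N // j ≠ i} → Plane |
        (∀ j, ‖Y j‖ < (m : ℝ) + 1) ∧
        ∃ TX : ℝ, 0 ≤ TX ∧ TX ≤ (n : ℝ) + 1 ∧
          ∃ y : {j : Fin N // j ≠ i} → ℝ → Plane,
            IsModifiedSolutionOn N a (sqgKernel s) i (Set.Ico 0 TX) y ∧
            ModifiedNoCollapseOn N i (Set.Ico 0 TX) y ∧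
            (∀ j, y j 0 = Y j) ∧ ModifiedCollapsesAt N i y TX}) ?_ ?_
  · intro X hX
    obtain ⟨hdist, T, hT, x, hsol, hx0, hcol⟩ := hX
    have hune : (Finset.univ : Finset (Fin N)).Nonempty := ⟨⟨0, hN⟩, Finset.mem_univ _⟩
    -- pigeonhole: find an index `i` whose modified system collapses
    have hexi : ∃ i : Fin N, ModifiedCollapsesAt N i (fun j t => x i t - x j.val t) T := by
      by_contra hno
      push_neg at hno
      simp only [ModifiedCollapsesAt] at hno
      push_neg at hno
      choose ε hε t₀ h0 hT' hbig using hno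
      have hεm : 0 < Finset.univ.inf' hune ε :=
        (Finset.lt_inf'_iff hune).mpr (fun i _ => hε i)
      have htm0 : 0 ≤ Finset.univ.sup' hune t₀ :=
        le_trans (h0 ⟨0, hN⟩) (Finset.le_sup' t₀ (Finset.mem_univ _))
      have htmT : Finset.univ.sup' hune t₀ < T :=
        (Finset.sup'_lt_iff hune).mpr (fun i _ => hT' i)
      obtain ⟨t, htt, htT2, i', j', hij, hnorm⟩ :=
        hcol (Finset.univ.inf' hune ε) hεm (Finset.univ.sup' hune t₀) htm0 htmT
      have h1 : ε i' ≤ ‖x i' t - x j' t‖ :=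
        hbig i' t (lt_of_le_of_lt (Finset.le_sup' t₀ (Finset.mem_univ i')) htt) htT2
          ⟨j', hij.symm⟩
      have h2 : Finset.univ.inf' hune ε ≤ ε i' := Finset.inf'_le ε (Finset.mem_univ i')
      exact absurd hnorm (not_lt.mpr (le_trans h2 h1))
    obtain ⟨i, hmc⟩ := hexi
    obtain ⟨n, hn⟩ := exists_nat_ge T
    obtain ⟨m, hm⟩ := exists_nat_gt (∑ j : {j : Fin N // j ≠ i}, ‖X i - X j.val‖)
    simp only [Set.mem_iUnion]
    refine ⟨i, n, m, ?_⟩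
    refine ⟨?_, T, le_of_lt hT, le_trans hn (by norm_num),
      fun j t => x i t - x j.val t, ?_, ?_, ?_, hmc⟩
    · intro j
      have hle : ‖X i - X j.val‖ ≤ ∑ k : {j : Fin N // j ≠ i}, ‖X i - X k.val‖ :=
        Finset.single_le_sum (f := fun k : {j : Fin N // j ≠ i} => ‖X i - X k.val‖)
          (fun k _ => norm_nonneg _) (Finset.mem_univ j)
      have : ((m : ℝ)) ≤ (m : ℝ) + 1 := by norm_num
      linarith
    · intro j t ht
      have Hi := hsol.2 i t ht
      have Hj := hsol.2 j.val t ht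
      refine (Hi.sub Hj).congr_deriv ?_
      exact (modified_rhs_eq N a (sqgKernel s) i j (fun k => x k t)).symm
    · constructor
      · intro j t ht
        exact sub_ne_zero_of_ne (hsol.1 t ht i j.val (Ne.symm j.prop))
      · intro j k hjk t ht heq
        exact hsol.1 t ht j.val k.val (fun h => hjk (Subtype.ext h)) (sub_right_inj.mp heq)
    · intro j
      show x i 0 - x j.val 0 = X i - X j.val
      rw [hx0 i, hx0 j.val]
  · refine measure_iUnion_null fun i => measure_iUnion_null fun n =>
      measure_iUnion_null fun m => ?_
    exact preimage_null N i _ (hyp i ((n : ℝ) + 1) (by positivity) ((m : ℝ) + 1) (by positivity))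
end
end
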